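/- For the seven-qubit state |ψ⟩₇ with real coefficients α₁, α₂, α₃, α₄ satisfying α₁²+α₂²+α₃²+α₄² = 1, the purity of region A satisfies Tr(ρ_A²) = (α₁² + α₃²)² + (α₂² + α₄²)². -/

import Mathlib

open Matrix Complex Polynomial
open scoped ComplexOrder

noncomputable section

/-- The three Pauli matrices σ_x, σ_y, σ_z. -/
def pauli : Fin 3 → Matrix (Fin 2) (Fin 2) ℂ :=
  ![!![0, 1; 1, 0], !![0, -Complex.I; Complex.I, 0], !![1, 0; 0, -1]]

/-- Kronecker product of `n` 2×2 matrices, as a matrix on `(Fin n → Fin 2)`. -/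
def kron {n : ℕ} (M : Fin n → Matrix (Fin 2) (Fin 2) ℂ) :
    Matrix (Fin n → Fin 2) (Fin n → Fin 2) ℂ :=
  Matrix.of fun f g => ∏ k, M k (f k) (g k)

/-- The bit string 0000000. -/
def w₁ : Fin 7 → Fin 2 := ![0, 0, 0, 0, 0, 0, 0]
/-- The bit string 0001111. -/
def w₂ : Fin 7 → Fin 2 := ![0, 0, 0, 1, 1, 1, 1]
/-- The bit string 1111000. -/
def w₃ : Fin 7 → Fin 2 := ![1, 1, 1, 1, 0, 0, 0]
/-- The bit string 1110111. -/
def w₄ : Fin 7 → Fin 2 := ![1, 1, 1, 0, 1, 1, 1]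

/-- The seven-qubit state `|ψ⟩₇ = α₁|0000000⟩ + α₂|0001111⟩ + α₃|1111000⟩ + α₄|1110111⟩`. -/
def psi7 (α₁ α₂ α₃ α₄ : ℝ) : (Fin 7 → Fin 2) → ℂ := fun f =>
  (if f = w₁ then (α₁ : ℂ) else 0) + (if f = w₂ then (α₂ : ℂ) else 0)
    + (if f = w₃ then (α₃ : ℂ) else 0) + (if f = w₄ then (α₄ : ℂ) else 0)

/-- The density matrix `ρ(f,g) = ψ(f)·conj(ψ(g))` of `|ψ⟩₇`. -/
def rho7 (α₁ α₂ α₃ α₄ : ℝ) : Matrix (Fin 7 → Fin 2) (Fin 7 → Fin 2) ℂ :=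
  Matrix.of fun f g => psi7 α₁ α₂ α₃ α₄ f * (starRingEnd ℂ) (psi7 α₁ α₂ α₃ α₄ g)

/-- The reduced density matrix of region `A` (the seventh qubit): partial trace of
`ρ` over the first six qubits. -/
def rhoA7 (α₁ α₂ α₃ α₄ : ℝ) : Matrix (Fin 2) (Fin 2) ℂ :=
  Matrix.of fun a a' =>
    ∑ b : Fin 6 → Fin 2, rho7 α₁ α₂ α₃ α₄ (Fin.snoc b a) (Fin.snoc b a')

lemma snoc_eq_iff {b : Fin 6 → Fin 2} {a : Fin 2} {w : Fin 7 → Fin 2} :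
    Fin.snoc b a = w ↔ b = Fin.init w ∧ a = w (Fin.last 6) := by
  constructor
  · rintro rfl; exact ⟨(Fin.init_snoc (α := fun _ => Fin 2) _ _).symm, (Fin.snoc_last (α := fun _ => Fin 2) _ _).symm⟩
  · rintro ⟨rfl, rfl⟩; exact Fin.snoc_init_self w

lemma psi7_snoc (α₁ α₂ α₃ α₄ : ℝ) (b : Fin 6 → Fin 2) (a : Fin 2) :
    psi7 α₁ α₂ α₃ α₄ (Fin.snoc b a) =
      if a = 0 then
        (if b = Fin.init w₁ then (α₁ : ℂ) else 0) + (if b = Fin.init w₃ then (α₃ : ℂ) else 0)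
      else
        (if b = Fin.init w₂ then (α₂ : ℂ) else 0) + (if b = Fin.init w₄ then (α₄ : ℂ) else 0) := by
  have h1 : w₁ 6 = 0 := rfl
  have h2 : w₂ 6 = 1 := rfl
  have h3 : w₃ 6 = 0 := rfl
  have h4 : w₄ 6 = 1 := rfl
  fin_cases a <;>
    simp [psi7, snoc_eq_iff, h1, h2, h3, h4]

lemma rhoA7_eq (α₁ α₂ α₃ α₄ : ℝ) :
    rhoA7 α₁ α₂ α₃ α₄ = !![((α₁^2 + α₃^2 : ℝ) : ℂ), 0; 0, ((α₂^2 + α₄^2 : ℝ) : ℂ)] := by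
  have h12 : Fin.init w₁ ≠ Fin.init w₂ := by decide
  have h13 : Fin.init w₁ ≠ Fin.init w₃ := by decide
  have h14 : Fin.init w₁ ≠ Fin.init w₄ := by decide
  have h23 : Fin.init w₂ ≠ Fin.init w₃ := by decide
  have h24 : Fin.init w₂ ≠ Fin.init w₄ := by decide
  have h34 : Fin.init w₃ ≠ Fin.init w₄ := by decide
  ext a a'
  fin_cases a <;> fin_cases a' <;>
    simp [rhoA7, rho7, psi7_snoc, add_mul, mul_add, Finset.sum_add_distrib, ite_mul, mul_ite,
      Finset.sum_ite_eq', h12, h13, h14, h23, h24, h34, h12.symm, h13.symm, h14.symm, h23.symm,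
      h24.symm, h34.symm, Complex.conj_ofReal] <;>
    ring

/-- For the seven-qubit state `|ψ⟩₇` with `α₁²+α₂²+α₃²+α₄² = 1`, the purity of region
`A` satisfies `Tr(ρ_A²) = (α₁² + α₃²)² + (α₂² + α₄²)²`. -/
theorem purity_rhoA7 (α₁ α₂ α₃ α₄ : ℝ)
    (hnorm : α₁ ^ 2 + α₂ ^ 2 + α₃ ^ 2 + α₄ ^ 2 = 1) :
    Matrix.trace (rhoA7 α₁ α₂ α₃ α₄ * rhoA7 α₁ α₂ α₃ α₄) =
      (((α₁ ^ 2 + α₃ ^ 2) ^ 2 + (α₂ ^ 2 + α₄ ^ 2) ^ 2 : ℝ) : ℂ) := by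
  rw [rhoA7_eq]
  simp [Matrix.trace_fin_two, Matrix.mul_apply, Fin.sum_univ_two]
  push_cast; ring
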